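/- Let Σ=(X,U,F) be a topological system (X is a topological space) and let Q be a nonempty compact subset of X. If for every u∈U the set-valued map F(·,u) : X ⇉ X is upper semicontinuous, and Q is strongly controlled invariant, i.e. for every x∈Q there exists u∈U such that F(x,u) ⊆ int Q, then the invariance feedback entropy h_inv of Σ and Q is finite. -/

import Mathlib

open Set Filter Topology

/-- An invariant cover `(𝒜, G)` of the system with transition function `F` and the set `Q`:
`cov` is a finite cover of `Q` by subsets of `Q` and `G` assigns to each cover element an
input such that `F(A, G(A)) ⊆ Q`. -/
structure InvCover {X U : Type*} (F : X → U → Set X) (Q : Set X) where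
  cov : Set (Set X)
  G : Set X → U
  finite : cov.Finite
  subset : ∀ A ∈ cov, A ⊆ Q
  covers : Q ⊆ ⋃₀ cov
  inv : ∀ A ∈ cov, ∀ x ∈ A, F x (G A) ⊆ Q

variable {X U : Type*}

/-- The set `P(α|_{[0;t]})` associated with `𝒮 ⊆ 𝒜^{[0;τ)}`: for `t+1 < τ` it is the set of
possible successor cover elements of the initial piece `α|_{[0;t]}`, and for `t = τ-1`
(i.e. `¬ t + 1 < τ`) it is the set `P(α)` of initial cover elements. -/
def Pset {τ : ℕ} (𝒮 : Set (Fin τ → Set X)) (α : Fin τ → Set X) (t : ℕ) :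
    Set (Set X) :=
  if ht : t + 1 < τ then
    {A | ∃ β ∈ 𝒮, (∀ t' : Fin τ, (t' : ℕ) ≤ t → β t' = α t') ∧ A = β ⟨t + 1, ht⟩}
  else
    {A | ∃ β ∈ 𝒮, ∃ h0 : 0 < τ, A = β ⟨0, h0⟩}

/-- `𝒮` is `(τ,Q)`-spanning in the invariant cover `c`. -/
def IsSpanning (F : X → U → Set X) (Q : Set X) (c : InvCover F Q) (τ : ℕ)
    (𝒮 : Set (Fin τ → Set X)) : Prop :=
  (∀ α ∈ 𝒮, ∀ t, α t ∈ c.cov) ∧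
  (∀ x ∈ Q, ∃ α ∈ 𝒮, ∃ h0 : 0 < τ, x ∈ α ⟨0, h0⟩) ∧
  (∀ α ∈ 𝒮, ∀ t : Fin τ, (t : ℕ) + 1 < τ →
    ∀ x ∈ α t, F x (c.G (α t)) ⊆ ⋃ A ∈ Pset 𝒮 α (t : ℕ), A)

/-- The expansion number `N(𝒮)`. -/
noncomputable def expNum {τ : ℕ} (𝒮 : Set (Fin τ → Set X)) : ℕ :=
  sSup {n | ∃ α ∈ 𝒮, n = ∏ t ∈ Finset.range τ, (Pset 𝒮 α t).ncard}

/-- `r_inv(τ, Q)` : the smallest expansion number of a `(τ,Q)`-spanning set (`⊤` if no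
spanning set exists). -/
noncomputable def rinv (F : X → U → Set X) (Q : Set X) (c : InvCover F Q)
    (τ : ℕ) : ℕ∞ :=
  sInf {n | ∃ 𝒮 : Set (Fin τ → Set X), IsSpanning F Q c τ 𝒮 ∧ n = (expNum 𝒮 : ℕ∞)}

/-- Base-2 logarithm `ℕ∞ → EReal`, with `log₂ ∞ = ∞`. -/
noncomputable def elog2 (m : ℕ∞) : EReal :=
  WithTop.recTopCoe ⊤ (fun n : ℕ => ((Real.logb 2 n : ℝ) : EReal)) m

/-- The entropy `h(𝒜,G)` of an invariant cover, defined through the infimum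
`inf_{τ ≥ 1} (1/τ) log₂ r_inv(τ,Q)` (which equals the limit). -/
noncomputable def coverEntropy (F : X → U → Set X) (Q : Set X)
    (c : InvCover F Q) : EReal :=
  ⨅ (τ : ℕ) (_ : 0 < τ), (((τ : ℝ)⁻¹ : ℝ) : EReal) * elog2 (rinv F Q c τ)

/-- The invariance feedback entropy `h_inv` of the system and `Q`. -/
noncomputable def invEntropy (F : X → U → Set X) (Q : Set X) : EReal :=
  ⨅ c : InvCover F Q, coverEntropy F Q c

/-- For a topological system with `Q` nonempty and compact, if `F(·,u)` is
upper semicontinuous for every `u` and `Q` is strongly controlled invariant, then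
`h_inv < ∞`. -/
theorem invEntropy_lt_top_of_usc_strongly_controlled_invariant
    {X U : Type*} [TopologicalSpace X] [Nonempty X] [Nonempty U]
    (F : X → U → Set X) (hF : ∀ x u, (F x u).Nonempty)
    (Q : Set X) (hQ : Q.Nonempty) (hQc : IsCompact Q)
    (husc : ∀ (u : U) (x : X) (V : Set X), IsOpen V → F x u ⊆ V →
      ∃ O : Set X, IsOpen O ∧ x ∈ O ∧ ∀ y ∈ O, F y u ⊆ V)
    (hsci : ∀ x ∈ Q, ∃ u : U, F x u ⊆ interior Q) :
    invEntropy F Q < ⊤ := by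
  classical
  -- choose inputs and open neighborhoods
  choose! u hu using hsci
  have hO : ∀ x ∈ Q, ∃ O : Set X, IsOpen O ∧ x ∈ O ∧ ∀ y ∈ O, F y (u x) ⊆ interior Q :=
    fun x hx => husc (u x) x (interior Q) isOpen_interior (hu x hx)
  choose! O hOopen hxO hOprop using hO
  obtain ⟨t, htQ, htcov⟩ := hQc.elim_nhds_subcover O
    (fun x hx => (hOopen x hx).mem_nhds (hxO x hx))
  -- the invariant cover
  set G : Set X → U := fun A =>
    if h : ∃ u' : U, ∀ y ∈ A, F y u' ⊆ Q then h.choose else Classical.arbitrary U with hG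
  have hGspec : ∀ A : Set X, (∃ u' : U, ∀ y ∈ A, F y u' ⊆ Q) → ∀ y ∈ A, F y (G A) ⊆ Q := by
    intro A h
    simpa [hG, dif_pos h] using h.choose_spec
  set cov : Set (Set X) := (fun x => O x ∩ Q) '' (↑t : Set X) with hcov
  have hex : ∀ A ∈ cov, ∃ u' : U, ∀ y ∈ A, F y u' ⊆ Q := by
    rintro A ⟨x, hxt, rfl⟩
    exact ⟨u x, fun y hy => (hOprop x (htQ x hxt) y hy.1).trans interior_subset⟩
  let c : InvCover F Q :=
    { cov := cov
      G := G
      finite := t.finite_toSet.image _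
      subset := by rintro A ⟨x, hxt, rfl⟩; exact inter_subset_right
      covers := by
        intro y hy
        obtain ⟨x, hxt, hyO⟩ := mem_iUnion₂.1 (htcov hy)
        exact ⟨O x ∩ Q, ⟨x, hxt, rfl⟩, hyO, hy⟩
      inv := fun A hA => hGspec A (hex A hA) }
  -- the spanning set for τ = 1
  obtain ⟨x₀, hx₀⟩ := hQ
  have hcovne : cov.Nonempty := by
    obtain ⟨A, hA, _⟩ := c.covers hx₀
    exact ⟨A, hA⟩
  set 𝒮 : Set (Fin 1 → Set X) := {α | α 0 ∈ cov} with h𝒮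
  have hspan : IsSpanning F Q c 1 𝒮 := by
    refine ⟨?_, ?_, ?_⟩
    · intro α hα s
      have : s = 0 := Subsingleton.elim s 0
      rw [this]; exact hα
    · intro y hy
      obtain ⟨A, hA, hyA⟩ := c.covers hy
      exact ⟨fun _ => A, hA, one_pos, hyA⟩
    · intro α hα s hs
      exact absurd hs (by omega)
  have hrle : rinv F Q c 1 ≤ (expNum 𝒮 : ℕ∞) := sInf_le ⟨𝒮, hspan, rfl⟩
  have hrlt : rinv F Q c 1 < ⊤ := lt_of_le_of_lt hrle (WithTop.coe_lt_top _)
  obtain ⟨m, hm⟩ := WithTop.ne_top_iff_exists.1 hrlt.ne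
  -- bound the entropy
  have h1 : invEntropy F Q ≤ coverEntropy F Q c := iInf_le _ c
  have h2 : coverEntropy F Q c ≤ (((1 : ℝ)⁻¹ : ℝ) : EReal) * elog2 (rinv F Q c 1) := by
    have := iInf₂_le (f := fun (τ : ℕ) (_ : 0 < τ) =>
      (((τ : ℝ)⁻¹ : ℝ) : EReal) * elog2 (rinv F Q c τ)) 1 one_pos
    simpa [coverEntropy] using this
  have h3 : (((1 : ℝ)⁻¹ : ℝ) : EReal) * elog2 (rinv F Q c 1) < ⊤ := by
    rw [← hm]
    simp only [elog2, WithTop.recTopCoe_coe, ← EReal.coe_mul]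
    exact EReal.coe_lt_top _
  exact lt_of_le_of_lt (h1.trans h2) h3
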